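/- Fix η_ch, η_dis ∈ (0, 1], reals p_b ≥ p_s ≥ 0, z ∈ ℝ, S_min ≤ 0 ≤ S_max, and μ ∈ ℝ. Define G_μ(s) = [z+s]⁺·p_b − [z+s]⁻·p_s − μ·(η_ch·[s]⁺ − (1/η_dis)·[s]⁻) for s ∈ [S_min, S_max], set μ₂ = p_s/η_ch and μ₃ = η_dis·p_b, and write m⁻ = min(0, max(−z, S_min)), m⁺ = max(0, min(−z, S_max)). If μ₂ < μ < μ₃, then the set of minimizers of G_μ on [S_min, S_max] is exactly {m⁻ + m⁺}. -/

import Mathlib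

/-- Region 5 of Theorem 3, case ζ < 1: if μ₂ < μ < μ₃, the minimizers of G_μ on [S_min, S_max] are exactly {m⁻ + m⁺}. -/
theorem region5_minimizers (ηch ηdis pb ps z Smin Smax μ : ℝ)
    (hch : ηch ∈ Set.Ioc (0 : ℝ) 1) (hdis : ηdis ∈ Set.Ioc (0 : ℝ) 1)
    (hpb : pb ≥ ps) (hps : ps ≥ 0) (hS1 : Smin ≤ 0) (hS2 : 0 ≤ Smax)
    (G : ℝ → ℝ)
    (hG : ∀ s, G s = max (z + s) 0 * pb - max (-(z + s)) 0 * ps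
        - μ * (ηch * max s 0 - (1 / ηdis) * max (-s) 0))
    (hμ1 : ps / ηch < μ) (hμ2 : μ < ηdis * pb) :
    {s ∈ Set.Icc Smin Smax | ∀ t ∈ Set.Icc Smin Smax, G s ≤ G t} = {min 0 (max (-z) Smin) + max 0 (min (-z) Smax)} := by
  obtain ⟨hc0, hc1⟩ := hch
  obtain ⟨hd0, hd1⟩ := hdis
  -- basic inequalities without division
  have hA : ps < μ * ηch := by
    have := (div_lt_iff₀ hc0).1 hμ1; linarith
  have hμpos : 0 < μ := by nlinarith
  have hpb0 : 0 ≤ pb := le_trans hps hpb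
  have hMd : ps * ηdis < μ := by nlinarith
  have hPd : μ < pb * ηdis := by nlinarith
  have hPc : μ * ηch < pb := by nlinarith
  -- piecewise formulas
  have GA : ∀ s, s ≤ 0 → z + s ≤ 0 → G s = (z + s) * ps - μ * s / ηdis := by
    intro s h1 h2
    rw [hG, max_eq_right h2, max_eq_left (by linarith : (0:ℝ) ≤ -(z+s)),
      max_eq_right h1, max_eq_left (by linarith : (0:ℝ) ≤ -s)]
    ring
  have GB : ∀ s, 0 ≤ s → 0 ≤ z + s → G s = (z + s) * pb - μ * ηch * s := by
    intro s h1 h2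
    rw [hG, max_eq_left h2, max_eq_right (by linarith : -(z+s) ≤ 0),
      max_eq_left h1, max_eq_right (by linarith : -s ≤ 0)]
    ring
  have GC : ∀ s, 0 ≤ s → z + s ≤ 0 → G s = (z + s) * ps - μ * ηch * s := by
    intro s h1 h2
    rw [hG, max_eq_right h2, max_eq_left (by linarith : (0:ℝ) ≤ -(z+s)),
      max_eq_left h1, max_eq_right (by linarith : -s ≤ 0)]
    ring
  have GD : ∀ s, s ≤ 0 → 0 ≤ z + s → G s = (z + s) * pb - μ * s / ηdis := by
    intro s h1 h2
    rw [hG, max_eq_left h2, max_eq_right (by linarith : -(z+s) ≤ 0),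
      max_eq_right h1, max_eq_left (by linarith : (0:ℝ) ≤ -s)]
    ring
  -- strict monotonicity on the four regions
  have hdec : ∀ a b : ℝ, a < b → b ≤ 0 → z + b ≤ 0 → G b < G a := by
    intro a b hab hb0 hbz
    rw [GA a (by linarith) (by linarith), GA b hb0 hbz]
    have h := mul_pos (sub_pos.2 hab) (sub_pos.2 hMd)
    have hd' : (0:ℝ) < ηdis⁻¹ := inv_pos.2 hd0
    field_simp
    nlinarith [mul_pos h hd0]
  have hinc : ∀ a b : ℝ, a < b → 0 ≤ a → 0 ≤ z + a → G a < G b := by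
    intro a b hab ha0 haz
    rw [GB a ha0 haz, GB b (by linarith) (by linarith)]
    nlinarith [mul_pos (sub_pos.2 hab) (sub_pos.2 hPc)]
  have hmid1 : ∀ a b : ℝ, a < b → 0 ≤ a → z + b ≤ 0 → G b < G a := by
    intro a b hab ha0 hbz
    rw [GC a ha0 (by linarith), GC b (by linarith) hbz]
    nlinarith [mul_pos (sub_pos.2 hab) (sub_pos.2 hA)]
  have hmid2 : ∀ a b : ℝ, a < b → 0 ≤ z + a → b ≤ 0 → G a < G b := by
    intro a b hab haz hb0
    rw [GD a (by linarith) haz, GD b hb0 (by linarith)]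
    have h := mul_pos (sub_pos.2 hab) (sub_pos.2 hPd)
    field_simp
    nlinarith [mul_pos h hd0]
  set m : ℝ := min 0 (max (-z) Smin) + max 0 (min (-z) Smax) with hm
  have hmIcc : m ∈ Set.Icc Smin Smax := by
    constructor
    · have h1 : Smin ≤ min 0 (max (-z) Smin) := le_min hS1 (le_max_right _ _)
      have h2 : (0:ℝ) ≤ max 0 (min (-z) Smax) := le_max_left _ _
      linarith
    · have h1 : min 0 (max (-z) Smin) ≤ 0 := min_le_left _ _
      have h2 : max 0 (min (-z) Smax) ≤ Smax := max_le hS2 (min_le_right _ _)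
      linarith
  -- main: m is the unique strict minimizer
  have hstrict : ∀ t ∈ Set.Icc Smin Smax, t ≠ m → G m < G t := by
    intro t ⟨ht1, ht2⟩ htm
    rcases le_or_gt 0 z with hz | hz
    · -- z ≥ 0 : m = max (-z) Smin ≤ 0
      have hmx : max (-z) Smin ≤ 0 := max_le (by linarith) hS1
      have hmn : min (-z) Smax ≤ 0 := le_trans (min_le_left _ _) (by linarith)
      have hmeq : m = max (-z) Smin := by
        rw [hm, min_eq_right hmx, max_eq_left hmn, add_zero]
      have hm0 : m ≤ 0 := hmeq ▸ hmx
      have hmz : 0 ≤ z + m := by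
        rw [hmeq]; have := le_max_left (-z) Smin; linarith
      rcases lt_trichotomy t m with h | h | h
      · -- t < m : then m = -z (else m = Smin ≤ t)
        rcases le_or_gt Smin (-z) with hc | hc
        · have hmz' : m = -z := by rw [hmeq, max_eq_left hc]
          exact hdec t m h hm0 (by rw [hmz']; ring_nf; linarith)
        · exfalso
          have : m = Smin := by rw [hmeq, max_eq_right hc.le]
          linarith [this ▸ h]
      · exact absurd h htm
      · -- t > m
        rcases le_or_gt t 0 with ht0 | ht0
        · exact hmid2 m t h hmz ht0
        · have h2 : G 0 < G t := hinc 0 t ht0 le_rfl (by linarith)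
          rcases eq_or_lt_of_le hm0 with he | he
          · rw [he]; exact h2
          · exact lt_trans (hmid2 m 0 he hmz le_rfl) h2
    · -- z < 0 : m = min (-z) Smax ≥ 0
      have hmx : (0:ℝ) ≤ max (-z) Smin := le_trans (by linarith) (le_max_left _ _)
      have hmn : (0:ℝ) ≤ min (-z) Smax := le_min (by linarith) hS2
      have hmeq : m = min (-z) Smax := by
        rw [hm, min_eq_left hmx, max_eq_right hmn, zero_add]
      have hm0 : 0 ≤ m := hmeq ▸ hmn
      have hmz : z + m ≤ 0 := by
        rw [hmeq]; have := min_le_left (-z) Smax; linarith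
      rcases lt_trichotomy t m with h | h | h
      · -- t < m
        rcases le_or_gt 0 t with ht0 | ht0
        · exact hmid1 t m h ht0 hmz
        · have h2 : G 0 < G t := hdec t 0 ht0 le_rfl (by linarith)
          rcases eq_or_lt_of_le hm0 with he | he
          · rw [← he]; exact h2
          · exact lt_trans (hmid1 0 m he le_rfl hmz) h2
      · exact absurd h htm
      · -- t > m : then m = -z (else m = Smax ≥ t)
        rcases le_or_gt (-z) Smax with hc | hc
        · have hmz' : m = -z := by rw [hmeq, min_eq_left hc]
          exact hinc m t h hm0 (by rw [hmz']; ring_nf; linarith)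
        · exfalso
          have : m = Smax := by rw [hmeq, min_eq_right hc.le]
          linarith [this ▸ h]
  have hle : ∀ t ∈ Set.Icc Smin Smax, G m ≤ G t := by
    intro t ht
    by_cases h : t = m
    · rw [h]
    · exact (hstrict t ht h).le
  ext s
  simp only [Set.mem_setOf_eq, Set.mem_singleton_iff]
  constructor
  · rintro ⟨hs, hopt⟩
    by_contra hne
    exact absurd (hopt m hmIcc) (not_le.2 (hstrict s hs hne))
  · rintro rfl
    exact ⟨hmIcc, hle⟩
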